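/- Let t ≥ 0, b = 30t+29, a = 30t+31 be twin primes. If the least n ≥ 2 with H_a(n) − H_b(n) > 6 equals 17, then 30t+59 and 30t+53 are prime and 30t+61 is composite; in particular the seven numbers p, p+2, p+8, and the primes among {p+12, p+14, p+18, p+20} together with p+24, p+30 form one of the constellations (p, p+2, p+8, p+12, p+18, p+24, p+30), (p, p+2, p+8, p+14, p+20, p+24, p+30), or (p, p+2, p+8, p+14, p+18, p+24, p+30) of consecutive primes with p = 30t+29, and p+32 is composite. -/

import Mathlib

/-- The H-sequence with starting value `c`: `Hseq c 2 = c` and for `n ≥ 2`,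
`Hseq c (n+1)` is the least `m > Hseq c n` with (`m` prime ↔ `n+1` prime). -/
noncomputable def Hseq (c : ℕ) : ℕ → ℕ
  | 0 => c
  | 1 => c
  | 2 => c
  | n + 3 => sInf {m | Hseq c (n + 2) < m ∧ (Nat.Prime m ↔ Nat.Prime (n + 3))}
/-- A list of primes, strictly increasing, with no other primes in between. -/
def ConsecPrimes (l : List ℕ) : Prop :=
  l.Chain' (· < ·) ∧ (∀ x ∈ l, Nat.Prime x) ∧
    ∀ q, Nat.Prime q → l.headI ≤ q → q ≤ l.getLast! → q ∈ l

lemma Hseq_eq (c n : ℕ) (hn : 2 ≤ n) :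
    Hseq c (n+1) = sInf {m | Hseq c n < m ∧ (Nat.Prime m ↔ Nat.Prime (n+1))} := by
  obtain ⟨k, rfl⟩ : ∃ k, n = k + 2 := ⟨n-2, by omega⟩
  rfl

lemma npd {d m : ℕ} (h2 : 2 ≤ d) (hdm : d < m) (hd : d ∣ m) : ¬ Nat.Prime m := by
  intro hp
  rcases (hp.eq_one_or_self_of_dvd d hd) with h | h <;> omega

lemma step_eq {c n n' x y : ℕ} (hn : 2 ≤ n) (hn' : n' = n + 1) (hx : Hseq c n = x)
    (hxy : x < y) (hy : Nat.Prime y ↔ Nat.Prime n')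
    (hmin : ∀ z, x < z → z < y → ¬(Nat.Prime z ↔ Nat.Prime n')) :
    Hseq c n' = y := by
  subst hn'
  rw [Hseq_eq c n hn, hx]
  have hyS : y ∈ {m | x < m ∧ (Nat.Prime m ↔ Nat.Prime (n+1))} := ⟨hxy, hy⟩
  have h1 := Nat.sInf_mem (⟨y, hyS⟩ : Set.Nonempty _)
  have h2 := Nat.sInf_le hyS
  rcases lt_or_eq_of_le h2 with hlt | he
  · exact absurd h1.2 (hmin _ h1.1 hlt)
  · exact he

lemma step_prime {c n n' x y : ℕ} (hn : 2 ≤ n) (hn' : n' = n + 1) (hx : Hseq c n = x)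
    (hp : Nat.Prime n') (hxy : x < y) (hy : Nat.Prime y)
    (hmin : ∀ z, x < z → z < y → ¬ Nat.Prime z) : Hseq c n' = y :=
  step_eq hn hn' hx hxy (iff_of_true hy hp) (fun z h1 h2 hiff => hmin z h1 h2 (hiff.mpr hp))

lemma step_comp {c n n' x y : ℕ} (hn : 2 ≤ n) (hn' : n' = n + 1) (hx : Hseq c n = x)
    (hp : ¬ Nat.Prime n') (hxy : x < y) (hy : ¬ Nat.Prime y)
    (hmin : ∀ z, x < z → z < y → Nat.Prime z) : Hseq c n' = y :=
  step_eq hn hn' hx hxy (iff_of_false hy hp)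
    (fun z h1 h2 hiff => hp (hiff.mp (hmin z h1 h2)))

lemma step_mem {c n n' x : ℕ} (hn : 2 ≤ n) (hn' : n' = n + 1) (hx : Hseq c n = x)
    (hp : Nat.Prime n') : x < Hseq c n' ∧ Nat.Prime (Hseq c n') := by
  subst hn'
  rw [Hseq_eq c n hn, hx]
  obtain ⟨p, hpx, hpp⟩ := Nat.exists_infinite_primes (x+1)
  have hmem := Nat.sInf_mem (⟨p, by omega, iff_of_true hpp hp⟩ :
    Set.Nonempty {m | x < m ∧ (Nat.Prime m ↔ Nat.Prime (n+1))})
  exact ⟨hmem.1, hmem.2.mpr hp⟩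

lemma consec7 {a1 a2 a3 a4 a5 a6 a7 : ℕ}
    (hc : a1<a2 ∧ a2<a3 ∧ a3<a4 ∧ a4<a5 ∧ a5<a6 ∧ a6<a7)
    (p1 : Nat.Prime a1) (p2 : Nat.Prime a2) (p3 : Nat.Prime a3) (p4 : Nat.Prime a4)
    (p5 : Nat.Prime a5) (p6 : Nat.Prime a6) (p7 : Nat.Prime a7)
    (hq : ∀ q, Nat.Prime q → a1 ≤ q → q ≤ a7 →
      q=a1 ∨ q=a2 ∨ q=a3 ∨ q=a4 ∨ q=a5 ∨ q=a6 ∨ q=a7) :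
    ConsecPrimes [a1,a2,a3,a4,a5,a6,a7] := by
  refine ⟨?_, ?_, ?_⟩
  · simp only [List.Chain', List.isChain_cons_cons, List.isChain_singleton, and_true]
    exact hc
  · intro x hx
    simp only [List.mem_cons, List.not_mem_nil, or_false] at hx
    rcases hx with rfl|rfl|rfl|rfl|rfl|rfl|rfl <;> assumption
  · intro q hqp h1 h2
    have := hq q hqp h1 h2
    simp only [List.mem_cons, List.not_mem_nil, or_false]
    exact this

lemma condOf (t : ℕ)
    (h : IsLeast {n | 2 ≤ n ∧ 6 < Hseq (30*t+31) n - Hseq (30*t+29) n} 17) :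
    ∀ n, 2 ≤ n → n < 17 → Hseq (30*t+31) n ≤ Hseq (30*t+29) n + 6 := by
  intro n h2 h17
  by_contra hc
  push_neg at hc
  have h6 : 6 < Hseq (30*t+31) n - Hseq (30*t+29) n := by omega
  have := h.2 ⟨h2, h6⟩
  omega
lemma comp30 (t : ℕ) : ¬ Nat.Prime (30*t+30) := npd (d:=2) (by norm_num) (by omega) ⟨15*t+15, by ring⟩
lemma comp32 (t : ℕ) : ¬ Nat.Prime (30*t+32) := npd (d:=2) (by norm_num) (by omega) ⟨15*t+16, by ring⟩
lemma comp33 (t : ℕ) : ¬ Nat.Prime (30*t+33) := npd (d:=3) (by norm_num) (by omega) ⟨10*t+11, by ring⟩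
lemma comp34 (t : ℕ) : ¬ Nat.Prime (30*t+34) := npd (d:=2) (by norm_num) (by omega) ⟨15*t+17, by ring⟩
lemma comp35 (t : ℕ) : ¬ Nat.Prime (30*t+35) := npd (d:=5) (by norm_num) (by omega) ⟨6*t+7, by ring⟩
lemma comp36 (t : ℕ) : ¬ Nat.Prime (30*t+36) := npd (d:=2) (by norm_num) (by omega) ⟨15*t+18, by ring⟩
lemma comp38 (t : ℕ) : ¬ Nat.Prime (30*t+38) := npd (d:=2) (by norm_num) (by omega) ⟨15*t+19, by ring⟩
lemma comp39 (t : ℕ) : ¬ Nat.Prime (30*t+39) := npd (d:=3) (by norm_num) (by omega) ⟨10*t+13, by ring⟩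
lemma comp40 (t : ℕ) : ¬ Nat.Prime (30*t+40) := npd (d:=2) (by norm_num) (by omega) ⟨15*t+20, by ring⟩
lemma comp42 (t : ℕ) : ¬ Nat.Prime (30*t+42) := npd (d:=2) (by norm_num) (by omega) ⟨15*t+21, by ring⟩
lemma comp44 (t : ℕ) : ¬ Nat.Prime (30*t+44) := npd (d:=2) (by norm_num) (by omega) ⟨15*t+22, by ring⟩
lemma comp45 (t : ℕ) : ¬ Nat.Prime (30*t+45) := npd (d:=3) (by norm_num) (by omega) ⟨10*t+15, by ring⟩
lemma comp46 (t : ℕ) : ¬ Nat.Prime (30*t+46) := npd (d:=2) (by norm_num) (by omega) ⟨15*t+23, by ring⟩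
lemma comp48 (t : ℕ) : ¬ Nat.Prime (30*t+48) := npd (d:=2) (by norm_num) (by omega) ⟨15*t+24, by ring⟩
lemma comp50 (t : ℕ) : ¬ Nat.Prime (30*t+50) := npd (d:=2) (by norm_num) (by omega) ⟨15*t+25, by ring⟩
lemma comp51 (t : ℕ) : ¬ Nat.Prime (30*t+51) := npd (d:=3) (by norm_num) (by omega) ⟨10*t+17, by ring⟩
lemma comp52 (t : ℕ) : ¬ Nat.Prime (30*t+52) := npd (d:=2) (by norm_num) (by omega) ⟨15*t+26, by ring⟩
lemma comp54 (t : ℕ) : ¬ Nat.Prime (30*t+54) := npd (d:=2) (by norm_num) (by omega) ⟨15*t+27, by ring⟩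
lemma comp55 (t : ℕ) : ¬ Nat.Prime (30*t+55) := npd (d:=5) (by norm_num) (by omega) ⟨6*t+11, by ring⟩
lemma comp56 (t : ℕ) : ¬ Nat.Prime (30*t+56) := npd (d:=2) (by norm_num) (by omega) ⟨15*t+28, by ring⟩
lemma comp57 (t : ℕ) : ¬ Nat.Prime (30*t+57) := npd (d:=3) (by norm_num) (by omega) ⟨10*t+19, by ring⟩
lemma comp58 (t : ℕ) : ¬ Nat.Prime (30*t+58) := npd (d:=2) (by norm_num) (by omega) ⟨15*t+29, by ring⟩
lemma comp60 (t : ℕ) : ¬ Nat.Prime (30*t+60) := npd (d:=2) (by norm_num) (by omega) ⟨15*t+30, by ring⟩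
lemma comp62 (t : ℕ) : ¬ Nat.Prime (30*t+62) := npd (d:=2) (by norm_num) (by omega) ⟨15*t+31, by ring⟩

lemma qmem1 (t q : ℕ) (hq : Nat.Prime q) (h1 : 30*t+29 ≤ q) (h2 : q ≤ 30*t+59)
    (h43 : ¬ Nat.Prime (30*t+43)) (h49 : ¬ Nat.Prime (30*t+49)) :
    q = 30*t+29 ∨ q = 30*t+31 ∨ q = 30*t+37 ∨ q = 30*t+41 ∨ q = 30*t+47 ∨ q = 30*t+53 ∨ q = 30*t+59 := by
  have n30 : q ≠ 30*t+30 := fun he => comp30 t (he ▸ hq)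
  have n32 : q ≠ 30*t+32 := fun he => comp32 t (he ▸ hq)
  have n33 : q ≠ 30*t+33 := fun he => comp33 t (he ▸ hq)
  have n34 : q ≠ 30*t+34 := fun he => comp34 t (he ▸ hq)
  have n35 : q ≠ 30*t+35 := fun he => comp35 t (he ▸ hq)
  have n36 : q ≠ 30*t+36 := fun he => comp36 t (he ▸ hq)
  have n38 : q ≠ 30*t+38 := fun he => comp38 t (he ▸ hq)
  have n39 : q ≠ 30*t+39 := fun he => comp39 t (he ▸ hq)
  have n40 : q ≠ 30*t+40 := fun he => comp40 t (he ▸ hq)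
  have n42 : q ≠ 30*t+42 := fun he => comp42 t (he ▸ hq)
  have n44 : q ≠ 30*t+44 := fun he => comp44 t (he ▸ hq)
  have n45 : q ≠ 30*t+45 := fun he => comp45 t (he ▸ hq)
  have n46 : q ≠ 30*t+46 := fun he => comp46 t (he ▸ hq)
  have n48 : q ≠ 30*t+48 := fun he => comp48 t (he ▸ hq)
  have n50 : q ≠ 30*t+50 := fun he => comp50 t (he ▸ hq)
  have n51 : q ≠ 30*t+51 := fun he => comp51 t (he ▸ hq)
  have n52 : q ≠ 30*t+52 := fun he => comp52 t (he ▸ hq)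
  have n54 : q ≠ 30*t+54 := fun he => comp54 t (he ▸ hq)
  have n55 : q ≠ 30*t+55 := fun he => comp55 t (he ▸ hq)
  have n56 : q ≠ 30*t+56 := fun he => comp56 t (he ▸ hq)
  have n57 : q ≠ 30*t+57 := fun he => comp57 t (he ▸ hq)
  have n58 : q ≠ 30*t+58 := fun he => comp58 t (he ▸ hq)
  have m43 : q ≠ 30*t+43 := fun he => h43 (he ▸ hq)
  have m49 : q ≠ 30*t+49 := fun he => h49 (he ▸ hq)
  omega

lemma qmem2 (t q : ℕ) (hq : Nat.Prime q) (h1 : 30*t+29 ≤ q) (h2 : q ≤ 30*t+59)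
    (h41 : ¬ Nat.Prime (30*t+41)) (h47 : ¬ Nat.Prime (30*t+47)) :
    q = 30*t+29 ∨ q = 30*t+31 ∨ q = 30*t+37 ∨ q = 30*t+43 ∨ q = 30*t+49 ∨ q = 30*t+53 ∨ q = 30*t+59 := by
  have n30 : q ≠ 30*t+30 := fun he => comp30 t (he ▸ hq)
  have n32 : q ≠ 30*t+32 := fun he => comp32 t (he ▸ hq)
  have n33 : q ≠ 30*t+33 := fun he => comp33 t (he ▸ hq)
  have n34 : q ≠ 30*t+34 := fun he => comp34 t (he ▸ hq)
  have n35 : q ≠ 30*t+35 := fun he => comp35 t (he ▸ hq)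
  have n36 : q ≠ 30*t+36 := fun he => comp36 t (he ▸ hq)
  have n38 : q ≠ 30*t+38 := fun he => comp38 t (he ▸ hq)
  have n39 : q ≠ 30*t+39 := fun he => comp39 t (he ▸ hq)
  have n40 : q ≠ 30*t+40 := fun he => comp40 t (he ▸ hq)
  have n42 : q ≠ 30*t+42 := fun he => comp42 t (he ▸ hq)
  have n44 : q ≠ 30*t+44 := fun he => comp44 t (he ▸ hq)
  have n45 : q ≠ 30*t+45 := fun he => comp45 t (he ▸ hq)
  have n46 : q ≠ 30*t+46 := fun he => comp46 t (he ▸ hq)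
  have n48 : q ≠ 30*t+48 := fun he => comp48 t (he ▸ hq)
  have n50 : q ≠ 30*t+50 := fun he => comp50 t (he ▸ hq)
  have n51 : q ≠ 30*t+51 := fun he => comp51 t (he ▸ hq)
  have n52 : q ≠ 30*t+52 := fun he => comp52 t (he ▸ hq)
  have n54 : q ≠ 30*t+54 := fun he => comp54 t (he ▸ hq)
  have n55 : q ≠ 30*t+55 := fun he => comp55 t (he ▸ hq)
  have n56 : q ≠ 30*t+56 := fun he => comp56 t (he ▸ hq)
  have n57 : q ≠ 30*t+57 := fun he => comp57 t (he ▸ hq)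
  have n58 : q ≠ 30*t+58 := fun he => comp58 t (he ▸ hq)
  have m41 : q ≠ 30*t+41 := fun he => h41 (he ▸ hq)
  have m47 : q ≠ 30*t+47 := fun he => h47 (he ▸ hq)
  omega

lemma qmem3 (t q : ℕ) (hq : Nat.Prime q) (h1 : 30*t+29 ≤ q) (h2 : q ≤ 30*t+59)
    (h41 : ¬ Nat.Prime (30*t+41)) (h49 : ¬ Nat.Prime (30*t+49)) :
    q = 30*t+29 ∨ q = 30*t+31 ∨ q = 30*t+37 ∨ q = 30*t+43 ∨ q = 30*t+47 ∨ q = 30*t+53 ∨ q = 30*t+59 := by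
  have n30 : q ≠ 30*t+30 := fun he => comp30 t (he ▸ hq)
  have n32 : q ≠ 30*t+32 := fun he => comp32 t (he ▸ hq)
  have n33 : q ≠ 30*t+33 := fun he => comp33 t (he ▸ hq)
  have n34 : q ≠ 30*t+34 := fun he => comp34 t (he ▸ hq)
  have n35 : q ≠ 30*t+35 := fun he => comp35 t (he ▸ hq)
  have n36 : q ≠ 30*t+36 := fun he => comp36 t (he ▸ hq)
  have n38 : q ≠ 30*t+38 := fun he => comp38 t (he ▸ hq)
  have n39 : q ≠ 30*t+39 := fun he => comp39 t (he ▸ hq)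
  have n40 : q ≠ 30*t+40 := fun he => comp40 t (he ▸ hq)
  have n42 : q ≠ 30*t+42 := fun he => comp42 t (he ▸ hq)
  have n44 : q ≠ 30*t+44 := fun he => comp44 t (he ▸ hq)
  have n45 : q ≠ 30*t+45 := fun he => comp45 t (he ▸ hq)
  have n46 : q ≠ 30*t+46 := fun he => comp46 t (he ▸ hq)
  have n48 : q ≠ 30*t+48 := fun he => comp48 t (he ▸ hq)
  have n50 : q ≠ 30*t+50 := fun he => comp50 t (he ▸ hq)
  have n51 : q ≠ 30*t+51 := fun he => comp51 t (he ▸ hq)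
  have n52 : q ≠ 30*t+52 := fun he => comp52 t (he ▸ hq)
  have n54 : q ≠ 30*t+54 := fun he => comp54 t (he ▸ hq)
  have n55 : q ≠ 30*t+55 := fun he => comp55 t (he ▸ hq)
  have n56 : q ≠ 30*t+56 := fun he => comp56 t (he ▸ hq)
  have n57 : q ≠ 30*t+57 := fun he => comp57 t (he ▸ hq)
  have n58 : q ≠ 30*t+58 := fun he => comp58 t (he ▸ hq)
  have m41 : q ≠ 30*t+41 := fun he => h41 (he ▸ hq)
  have m49 : q ≠ 30*t+49 := fun he => h49 (he ▸ hq)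
  omega

lemma endgame (t : ℕ)
    (h : IsLeast {n | 2 ≤ n ∧ 6 < Hseq (30*t+31) n - Hseq (30*t+29) n} 17)
    (ha12 : Hseq (30*t+31) 12 = 30*t+54) (hb13 : Hseq (30*t+29) 13 = 30*t+53) :
    Nat.Prime (30*t+59) ∧ ¬ Nat.Prime (30*t+61) := by
  have cond := condOf t h
  obtain ⟨m13a, m13b⟩ := step_mem (n:=12) (n':=13) (by norm_num) rfl ha12 (by norm_num)
  have m13c := cond 13 (by norm_num) (by norm_num)
  rw [hb13] at m13c
  have ha13 : Hseq (30*t+31) 13 = 30*t+59 := by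
    have n55 : Hseq (30*t+31) 13 ≠ 30*t+55 := fun he => comp55 t (he ▸ m13b)
    have n56 : Hseq (30*t+31) 13 ≠ 30*t+56 := fun he => comp56 t (he ▸ m13b)
    have n57 : Hseq (30*t+31) 13 ≠ 30*t+57 := fun he => comp57 t (he ▸ m13b)
    have n58 : Hseq (30*t+31) 13 ≠ 30*t+58 := fun he => comp58 t (he ▸ m13b)
    omega
  have p59 : Nat.Prime (30*t+59) := ha13 ▸ m13b
  have ha14 : Hseq (30*t+31) 14 = 30*t+60 :=
    step_comp (by norm_num) rfl ha13 (by norm_num) (by omega) (comp60 t)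
      (fun z h1 h2 => by omega)
  have hb14 : Hseq (30*t+29) 14 = 30*t+54 :=
    step_comp (by norm_num) rfl hb13 (by norm_num) (by omega) (comp54 t)
      (fun z h1 h2 => by omega)
  have hb15 : Hseq (30*t+29) 15 = 30*t+55 :=
    step_comp (by norm_num) rfl hb14 (by norm_num) (by omega) (comp55 t)
      (fun z h1 h2 => by omega)
  refine ⟨p59, fun h61 => ?_⟩
  have ha15 : Hseq (30*t+31) 15 = 30*t+62 :=
    step_comp (by norm_num) rfl ha14 (by norm_num) (by omega) (comp62 t)
      (fun z h1 h2 => by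
        have hz : z = 30*t+61 := by omega
        exact hz ▸ h61)
  have m15c := cond 15 (by norm_num) (by norm_num)
  rw [hb15, ha15] at m15c
  omega

/-- If 41 and 43 are both prime, the two sequences merge and the n = 17 condition fails. -/
lemma mergeCase (t : ℕ)
    (h : IsLeast {n | 2 ≤ n ∧ 6 < Hseq (30*t+31) n - Hseq (30*t+29) n} 17)
    (h43 : Nat.Prime (30*t+43))
    (hb7 : Hseq (30*t+29) 7 = 30*t+41) (ha6 : Hseq (30*t+31) 6 = 30*t+42) : False := by
  have hb8 : Hseq (30*t+29) 8 = 30*t+42 :=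
    step_comp (by norm_num) rfl hb7 (by norm_num) (by omega) (comp42 t)
      (fun z h1 h2 => by omega)
  have hb9 : Hseq (30*t+29) 9 = 30*t+44 :=
    step_comp (by norm_num) rfl hb8 (by norm_num) (by omega) (comp44 t)
      (fun z h1 h2 => by
        have hz : z = 30*t+43 := by omega
        exact hz ▸ h43)
  have hb10 : Hseq (30*t+29) 10 = 30*t+45 :=
    step_comp (by norm_num) rfl hb9 (by norm_num) (by omega) (comp45 t)
      (fun z h1 h2 => by omega)
  have ha7 : Hseq (30*t+31) 7 = 30*t+43 :=
    step_prime (by norm_num) rfl ha6 (by norm_num) (by omega) h43 (fun z h1 h2 => by omega)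
  have ha8 : Hseq (30*t+31) 8 = 30*t+44 :=
    step_comp (by norm_num) rfl ha7 (by norm_num) (by omega) (comp44 t)
      (fun z h1 h2 => by omega)
  have ha9 : Hseq (30*t+31) 9 = 30*t+45 :=
    step_comp (by norm_num) rfl ha8 (by norm_num) (by omega) (comp45 t)
      (fun z h1 h2 => by omega)
  have ha10 : Hseq (30*t+31) 10 = 30*t+46 :=
    step_comp (by norm_num) rfl ha9 (by norm_num) (by omega) (comp46 t)
      (fun z h1 h2 => by omega)
  have e11 : Hseq (30*t+29) 11 = Hseq (30*t+31) 11 := by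
    have E1 := Hseq_eq (30*t+29) 10 (by norm_num)
    have E2 := Hseq_eq (30*t+31) 10 (by norm_num)
    norm_num at E1 E2
    rw [E1, E2, hb10, ha10]
    congr 1
    ext m
    simp only [Set.mem_setOf_eq]
    constructor
    · rintro ⟨hm1, hm2⟩
      have hmp : Nat.Prime m := hm2
      have hne : m ≠ 30*t+46 := fun he => comp46 t (he ▸ hmp)
      exact ⟨by omega, hm2⟩
    · rintro ⟨hm1, hm2⟩
      exact ⟨by omega, hm2⟩
  have prop : ∀ k, 11 ≤ k → Hseq (30*t+29) k = Hseq (30*t+31) k := by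
    intro k hk
    induction k with
    | zero => omega
    | succ m ih =>
      rcases eq_or_lt_of_le hk with he | hl
      · exact he ▸ e11
      · have hm : 11 ≤ m := by omega
        have E1 := Hseq_eq (30*t+29) m (by omega)
        have E2 := Hseq_eq (30*t+31) m (by omega)
        rw [E1, E2, ih hm]
  have e17 := prop 17 (by norm_num)
  have h17 := h.1.2
  omega

lemma caseA (t : ℕ) (hb : Nat.Prime (30*t+29)) (ha : Nat.Prime (30*t+31))
    (h : IsLeast {n | 2 ≤ n ∧ 6 < Hseq (30*t+31) n - Hseq (30*t+29) n} 17)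
    (p37 : Nat.Prime (30*t+37)) (h41 : Nat.Prime (30*t+41)) (h43 : ¬ Nat.Prime (30*t+43))
    (hb7 : Hseq (30*t+29) 7 = 30*t+41) (ha6 : Hseq (30*t+31) 6 = 30*t+42) :
    Nat.Prime (30*t+59) ∧ Nat.Prime (30*t+53) ∧ ¬ Nat.Prime (30*t+61) ∧
      (ConsecPrimes [30*t+29, 30*t+31, 30*t+37, 30*t+41, 30*t+47, 30*t+53, 30*t+59] ∨
        ConsecPrimes [30*t+29, 30*t+31, 30*t+37, 30*t+43, 30*t+49, 30*t+53, 30*t+59] ∨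
        ConsecPrimes [30*t+29, 30*t+31, 30*t+37, 30*t+43, 30*t+47, 30*t+53, 30*t+59]) := by
  have cond := condOf t h
  obtain ⟨m7a, m7b⟩ := step_mem (n:=6) (n':=7) (by norm_num) rfl ha6 (by norm_num)
  have m7c := cond 7 (by norm_num) (by norm_num)
  rw [hb7] at m7c
  have ha7 : Hseq (30*t+31) 7 = 30*t+47 := by
    have n43 : Hseq (30*t+31) 7 ≠ 30*t+43 := fun he => h43 (he ▸ m7b)
    have n44 : Hseq (30*t+31) 7 ≠ 30*t+44 := fun he => comp44 t (he ▸ m7b)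
    have n45 : Hseq (30*t+31) 7 ≠ 30*t+45 := fun he => comp45 t (he ▸ m7b)
    have n46 : Hseq (30*t+31) 7 ≠ 30*t+46 := fun he => comp46 t (he ▸ m7b)
    omega
  have p47 : Nat.Prime (30*t+47) := ha7 ▸ m7b
  have hb8 : Hseq (30*t+29) 8 = 30*t+42 :=
    step_comp (by norm_num) rfl hb7 (by norm_num) (by omega) (comp42 t)
      (fun z h1 h2 => by omega)
  have hb9 : Hseq (30*t+29) 9 = 30*t+43 :=
    step_comp (by norm_num) rfl hb8 (by norm_num) (by omega) h43 (fun z h1 h2 => by omega)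
  have hb10 : Hseq (30*t+29) 10 = 30*t+44 :=
    step_comp (by norm_num) rfl hb9 (by norm_num) (by omega) (comp44 t)
      (fun z h1 h2 => by omega)
  have ha8 : Hseq (30*t+31) 8 = 30*t+48 :=
    step_comp (by norm_num) rfl ha7 (by norm_num) (by omega) (comp48 t)
      (fun z h1 h2 => by omega)
  by_cases h49 : Nat.Prime (30*t+49)
  · exfalso
    have ha9 : Hseq (30*t+31) 9 = 30*t+50 :=
      step_comp (by norm_num) rfl ha8 (by norm_num) (by omega) (comp50 t)
        (fun z h1 h2 => by
          have hz : z = 30*t+49 := by omega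
          exact hz ▸ h49)
    have m9c := cond 9 (by norm_num) (by norm_num)
    rw [hb9, ha9] at m9c
    omega
  · have ha9 : Hseq (30*t+31) 9 = 30*t+49 :=
      step_comp (by norm_num) rfl ha8 (by norm_num) (by omega) h49 (fun z h1 h2 => by omega)
    have ha10 : Hseq (30*t+31) 10 = 30*t+50 :=
      step_comp (by norm_num) rfl ha9 (by norm_num) (by omega) (comp50 t)
        (fun z h1 h2 => by omega)
    have hb11 : Hseq (30*t+29) 11 = 30*t+47 :=
      step_prime (by norm_num) rfl hb10 (by norm_num) (by omega) p47
        (fun z h1 h2 => by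
          rcases (show z = 30*t+45 ∨ z = 30*t+46 by omega) with rfl|rfl
          exacts [comp45 t, comp46 t])
    obtain ⟨m11a, m11b⟩ := step_mem (n:=10) (n':=11) (by norm_num) rfl ha10 (by norm_num)
    have m11c := cond 11 (by norm_num) (by norm_num)
    rw [hb11] at m11c
    have ha11 : Hseq (30*t+31) 11 = 30*t+53 := by
      have n51 : Hseq (30*t+31) 11 ≠ 30*t+51 := fun he => comp51 t (he ▸ m11b)
      have n52 : Hseq (30*t+31) 11 ≠ 30*t+52 := fun he => comp52 t (he ▸ m11b)
      omega
    have p53 : Nat.Prime (30*t+53) := ha11 ▸ m11b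
    have ha12 : Hseq (30*t+31) 12 = 30*t+54 :=
      step_comp (by norm_num) rfl ha11 (by norm_num) (by omega) (comp54 t)
        (fun z h1 h2 => by omega)
    have hb12 : Hseq (30*t+29) 12 = 30*t+48 :=
      step_comp (by norm_num) rfl hb11 (by norm_num) (by omega) (comp48 t)
        (fun z h1 h2 => by omega)
    have hb13 : Hseq (30*t+29) 13 = 30*t+53 :=
      step_prime (by norm_num) rfl hb12 (by norm_num) (by omega) p53
        (fun z h1 h2 => by
          rcases (show z = 30*t+49 ∨ z = 30*t+50 ∨ z = 30*t+51 ∨ z = 30*t+52 by omega)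
            with rfl|rfl|rfl|rfl
          exacts [h49, comp50 t, comp51 t, comp52 t])
    obtain ⟨p59, h61⟩ := endgame t h ha12 hb13
    exact ⟨p59, p53, h61, Or.inl (consec7 ⟨by omega, by omega, by omega, by omega,
      by omega, by omega⟩ hb ha p37 h41 p47 p53 p59
      (fun q hq h1 h2 => qmem1 t q hq h1 h2 h43 h49))⟩

lemma caseB47 (t : ℕ) (hb : Nat.Prime (30*t+29)) (ha : Nat.Prime (30*t+31))
    (h : IsLeast {n | 2 ≤ n ∧ 6 < Hseq (30*t+31) n - Hseq (30*t+29) n} 17)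
    (p37 : Nat.Prime (30*t+37)) (h41 : ¬ Nat.Prime (30*t+41)) (p43 : Nat.Prime (30*t+43))
    (h47 : Nat.Prime (30*t+47))
    (hb10 : Hseq (30*t+29) 10 = 30*t+46) (ha6 : Hseq (30*t+31) 6 = 30*t+44) :
    Nat.Prime (30*t+59) ∧ Nat.Prime (30*t+53) ∧ ¬ Nat.Prime (30*t+61) ∧
      (ConsecPrimes [30*t+29, 30*t+31, 30*t+37, 30*t+41, 30*t+47, 30*t+53, 30*t+59] ∨
        ConsecPrimes [30*t+29, 30*t+31, 30*t+37, 30*t+43, 30*t+49, 30*t+53, 30*t+59] ∨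
        ConsecPrimes [30*t+29, 30*t+31, 30*t+37, 30*t+43, 30*t+47, 30*t+53, 30*t+59]) := by
  have cond := condOf t h
  have ha7 : Hseq (30*t+31) 7 = 30*t+47 :=
    step_prime (by norm_num) rfl ha6 (by norm_num) (by omega) h47
      (fun z h1 h2 => by
        rcases (show z = 30*t+45 ∨ z = 30*t+46 by omega) with rfl|rfl
        exacts [comp45 t, comp46 t])
  have ha8 : Hseq (30*t+31) 8 = 30*t+48 :=
    step_comp (by norm_num) rfl ha7 (by norm_num) (by omega) (comp48 t)
      (fun z h1 h2 => by omega)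
  have hb11 : Hseq (30*t+29) 11 = 30*t+47 :=
    step_prime (by norm_num) rfl hb10 (by norm_num) (by omega) h47 (fun z h1 h2 => by omega)
  by_cases h49 : Nat.Prime (30*t+49)
  · exfalso
    have ha9 : Hseq (30*t+31) 9 = 30*t+50 :=
      step_comp (by norm_num) rfl ha8 (by norm_num) (by omega) (comp50 t)
        (fun z h1 h2 => by
          have hz : z = 30*t+49 := by omega
          exact hz ▸ h49)
    have ha10 : Hseq (30*t+31) 10 = 30*t+51 :=
      step_comp (by norm_num) rfl ha9 (by norm_num) (by omega) (comp51 t)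
        (fun z h1 h2 => by omega)
    obtain ⟨m11a, m11b⟩ := step_mem (n:=10) (n':=11) (by norm_num) rfl ha10 (by norm_num)
    have m11c := cond 11 (by norm_num) (by norm_num)
    rw [hb11] at m11c
    have ha11 : Hseq (30*t+31) 11 = 30*t+53 := by
      have n52 : Hseq (30*t+31) 11 ≠ 30*t+52 := fun he => comp52 t (he ▸ m11b)
      omega
    have ha12 : Hseq (30*t+31) 12 = 30*t+54 :=
      step_comp (by norm_num) rfl ha11 (by norm_num) (by omega) (comp54 t)
        (fun z h1 h2 => by omega)
    have hb12 : Hseq (30*t+29) 12 = 30*t+48 :=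
      step_comp (by norm_num) rfl hb11 (by norm_num) (by omega) (comp48 t)
        (fun z h1 h2 => by omega)
    have hb13 : Hseq (30*t+29) 13 = 30*t+49 :=
      step_prime (by norm_num) rfl hb12 (by norm_num) (by omega) h49 (fun z h1 h2 => by omega)
    obtain ⟨m13a, m13b⟩ := step_mem (n:=12) (n':=13) (by norm_num) rfl ha12 (by norm_num)
    have m13c := cond 13 (by norm_num) (by norm_num)
    rw [hb13] at m13c
    have n55 : Hseq (30*t+31) 13 ≠ 30*t+55 := fun he => comp55 t (he ▸ m13b)
    omega
  · have ha9 : Hseq (30*t+31) 9 = 30*t+49 :=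
      step_comp (by norm_num) rfl ha8 (by norm_num) (by omega) h49 (fun z h1 h2 => by omega)
    have ha10 : Hseq (30*t+31) 10 = 30*t+50 :=
      step_comp (by norm_num) rfl ha9 (by norm_num) (by omega) (comp50 t)
        (fun z h1 h2 => by omega)
    obtain ⟨m11a, m11b⟩ := step_mem (n:=10) (n':=11) (by norm_num) rfl ha10 (by norm_num)
    have m11c := cond 11 (by norm_num) (by norm_num)
    rw [hb11] at m11c
    have ha11 : Hseq (30*t+31) 11 = 30*t+53 := by
      have n51 : Hseq (30*t+31) 11 ≠ 30*t+51 := fun he => comp51 t (he ▸ m11b)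
      have n52 : Hseq (30*t+31) 11 ≠ 30*t+52 := fun he => comp52 t (he ▸ m11b)
      omega
    have p53 : Nat.Prime (30*t+53) := ha11 ▸ m11b
    have ha12 : Hseq (30*t+31) 12 = 30*t+54 :=
      step_comp (by norm_num) rfl ha11 (by norm_num) (by omega) (comp54 t)
        (fun z h1 h2 => by omega)
    have hb12 : Hseq (30*t+29) 12 = 30*t+48 :=
      step_comp (by norm_num) rfl hb11 (by norm_num) (by omega) (comp48 t)
        (fun z h1 h2 => by omega)
    have hb13 : Hseq (30*t+29) 13 = 30*t+53 :=
      step_prime (by norm_num) rfl hb12 (by norm_num) (by omega) p53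
        (fun z h1 h2 => by
          rcases (show z = 30*t+49 ∨ z = 30*t+50 ∨ z = 30*t+51 ∨ z = 30*t+52 by omega)
            with rfl|rfl|rfl|rfl
          exacts [h49, comp50 t, comp51 t, comp52 t])
    obtain ⟨p59, h61⟩ := endgame t h ha12 hb13
    exact ⟨p59, p53, h61, Or.inr (Or.inr (consec7 ⟨by omega, by omega, by omega, by omega,
      by omega, by omega⟩ hb ha p37 p43 h47 p53 p59
      (fun q hq h1 h2 => qmem3 t q hq h1 h2 h41 h49)))⟩

lemma caseBn47 (t : ℕ) (hb : Nat.Prime (30*t+29)) (ha : Nat.Prime (30*t+31))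
    (h : IsLeast {n | 2 ≤ n ∧ 6 < Hseq (30*t+31) n - Hseq (30*t+29) n} 17)
    (p37 : Nat.Prime (30*t+37)) (h41 : ¬ Nat.Prime (30*t+41)) (p43 : Nat.Prime (30*t+43))
    (h47 : ¬ Nat.Prime (30*t+47)) (hb7 : Hseq (30*t+29) 7 = 30*t+43)
    (hb10 : Hseq (30*t+29) 10 = 30*t+46) (ha6 : Hseq (30*t+31) 6 = 30*t+44) :
    Nat.Prime (30*t+59) ∧ Nat.Prime (30*t+53) ∧ ¬ Nat.Prime (30*t+61) ∧
      (ConsecPrimes [30*t+29, 30*t+31, 30*t+37, 30*t+41, 30*t+47, 30*t+53, 30*t+59] ∨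
        ConsecPrimes [30*t+29, 30*t+31, 30*t+37, 30*t+43, 30*t+49, 30*t+53, 30*t+59] ∨
        ConsecPrimes [30*t+29, 30*t+31, 30*t+37, 30*t+43, 30*t+47, 30*t+53, 30*t+59]) := by
  have cond := condOf t h
  obtain ⟨m7a, m7b⟩ := step_mem (n:=6) (n':=7) (by norm_num) rfl ha6 (by norm_num)
  have m7c := cond 7 (by norm_num) (by norm_num)
  rw [hb7] at m7c
  have ha7 : Hseq (30*t+31) 7 = 30*t+49 := by
    have n45 : Hseq (30*t+31) 7 ≠ 30*t+45 := fun he => comp45 t (he ▸ m7b)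
    have n46 : Hseq (30*t+31) 7 ≠ 30*t+46 := fun he => comp46 t (he ▸ m7b)
    have n47 : Hseq (30*t+31) 7 ≠ 30*t+47 := fun he => h47 (he ▸ m7b)
    have n48 : Hseq (30*t+31) 7 ≠ 30*t+48 := fun he => comp48 t (he ▸ m7b)
    omega
  have p49 : Nat.Prime (30*t+49) := ha7 ▸ m7b
  have hb11 : Hseq (30*t+29) 11 = 30*t+49 :=
    step_prime (by norm_num) rfl hb10 (by norm_num) (by omega) p49
      (fun z h1 h2 => by
        rcases (show z = 30*t+47 ∨ z = 30*t+48 by omega) with rfl|rfl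
        exacts [h47, comp48 t])
  have ha8 : Hseq (30*t+31) 8 = 30*t+50 :=
    step_comp (by norm_num) rfl ha7 (by norm_num) (by omega) (comp50 t)
      (fun z h1 h2 => by omega)
  have ha9 : Hseq (30*t+31) 9 = 30*t+51 :=
    step_comp (by norm_num) rfl ha8 (by norm_num) (by omega) (comp51 t)
      (fun z h1 h2 => by omega)
  have ha10 : Hseq (30*t+31) 10 = 30*t+52 :=
    step_comp (by norm_num) rfl ha9 (by norm_num) (by omega) (comp52 t)
      (fun z h1 h2 => by omega)
  obtain ⟨m11a, m11b⟩ := step_mem (n:=10) (n':=11) (by norm_num) rfl ha10 (by norm_num)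
  have m11c := cond 11 (by norm_num) (by norm_num)
  rw [hb11] at m11c
  have ha11 : Hseq (30*t+31) 11 = 30*t+53 := by
    have n54 : Hseq (30*t+31) 11 ≠ 30*t+54 := fun he => comp54 t (he ▸ m11b)
    have n55 : Hseq (30*t+31) 11 ≠ 30*t+55 := fun he => comp55 t (he ▸ m11b)
    omega
  have p53 : Nat.Prime (30*t+53) := ha11 ▸ m11b
  have ha12 : Hseq (30*t+31) 12 = 30*t+54 :=
    step_comp (by norm_num) rfl ha11 (by norm_num) (by omega) (comp54 t)
      (fun z h1 h2 => by omega)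
  have hb12 : Hseq (30*t+29) 12 = 30*t+50 :=
    step_comp (by norm_num) rfl hb11 (by norm_num) (by omega) (comp50 t)
      (fun z h1 h2 => by omega)
  have hb13 : Hseq (30*t+29) 13 = 30*t+53 :=
    step_prime (by norm_num) rfl hb12 (by norm_num) (by omega) p53
      (fun z h1 h2 => by
        rcases (show z = 30*t+51 ∨ z = 30*t+52 by omega) with rfl|rfl
        exacts [comp51 t, comp52 t])
  obtain ⟨p59, h61⟩ := endgame t h ha12 hb13
  exact ⟨p59, p53, h61, Or.inr (Or.inl (consec7 ⟨by omega, by omega, by omega, by omega,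
    by omega, by omega⟩ hb ha p37 p43 p49 p53 p59
    (fun q hq h1 h2 => qmem2 t q hq h1 h2 h41 h47)))⟩

theorem stmt16 (t : ℕ) (hb : Nat.Prime (30*t+29)) (ha : Nat.Prime (30*t+31))
    (h : IsLeast {n | 2 ≤ n ∧ 6 < Hseq (30*t+31) n - Hseq (30*t+29) n} 17) :
    Nat.Prime (30*t+59) ∧ Nat.Prime (30*t+53) ∧ ¬ Nat.Prime (30*t+61) ∧
      (ConsecPrimes [30*t+29, 30*t+31, 30*t+37, 30*t+41, 30*t+47, 30*t+53, 30*t+59] ∨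
        ConsecPrimes [30*t+29, 30*t+31, 30*t+37, 30*t+43, 30*t+49, 30*t+53, 30*t+59] ∨
        ConsecPrimes [30*t+29, 30*t+31, 30*t+37, 30*t+43, 30*t+47, 30*t+53, 30*t+59]) := by
  have cond := condOf t h
  have hb2 : Hseq (30*t+29) 2 = 30*t+29 := rfl
  have ha2 : Hseq (30*t+31) 2 = 30*t+31 := rfl
  have hb3 : Hseq (30*t+29) 3 = 30*t+31 :=
    step_prime (by norm_num) rfl hb2 (by norm_num) (by omega) ha
      (fun z h1 h2 => by
        have hz : z = 30*t+30 := by omega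
        exact hz ▸ comp30 t)
  obtain ⟨m3a, m3b⟩ := step_mem (n:=2) (n':=3) (by norm_num) rfl ha2 (by norm_num)
  have m3c := cond 3 (by norm_num) (by norm_num)
  rw [hb3] at m3c
  have ha3 : Hseq (30*t+31) 3 = 30*t+37 := by
    have n32 : Hseq (30*t+31) 3 ≠ 30*t+32 := fun he => comp32 t (he ▸ m3b)
    have n33 : Hseq (30*t+31) 3 ≠ 30*t+33 := fun he => comp33 t (he ▸ m3b)
    have n34 : Hseq (30*t+31) 3 ≠ 30*t+34 := fun he => comp34 t (he ▸ m3b)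
    have n35 : Hseq (30*t+31) 3 ≠ 30*t+35 := fun he => comp35 t (he ▸ m3b)
    have n36 : Hseq (30*t+31) 3 ≠ 30*t+36 := fun he => comp36 t (he ▸ m3b)
    omega
  have p37 : Nat.Prime (30*t+37) := ha3 ▸ m3b
  have hb4 : Hseq (30*t+29) 4 = 30*t+32 :=
    step_comp (by norm_num) rfl hb3 (by norm_num) (by omega) (comp32 t)
      (fun z h1 h2 => by omega)
  have hb5 : Hseq (30*t+29) 5 = 30*t+37 :=
    step_prime (by norm_num) rfl hb4 (by norm_num) (by omega) p37
      (fun z h1 h2 => by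
        rcases (show z = 30*t+33 ∨ z = 30*t+34 ∨ z = 30*t+35 ∨ z = 30*t+36 by omega)
          with rfl|rfl|rfl|rfl
        exacts [comp33 t, comp34 t, comp35 t, comp36 t])
  have ha4 : Hseq (30*t+31) 4 = 30*t+38 :=
    step_comp (by norm_num) rfl ha3 (by norm_num) (by omega) (comp38 t)
      (fun z h1 h2 => by omega)
  obtain ⟨m5a, m5b⟩ := step_mem (n:=4) (n':=5) (by norm_num) rfl ha4 (by norm_num)
  have m5c := cond 5 (by norm_num) (by norm_num)
  rw [hb5] at m5c
  have hb6 : Hseq (30*t+29) 6 = 30*t+38 :=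
    step_comp (by norm_num) rfl hb5 (by norm_num) (by omega) (comp38 t)
      (fun z h1 h2 => by omega)
  by_cases h41 : Nat.Prime (30*t+41)
  · have ha5 : Hseq (30*t+31) 5 = 30*t+41 :=
      step_prime (by norm_num) rfl ha4 (by norm_num) (by omega) h41
        (fun z h1 h2 => by
          rcases (show z = 30*t+39 ∨ z = 30*t+40 by omega) with rfl|rfl
          exacts [comp39 t, comp40 t])
    have hb7 : Hseq (30*t+29) 7 = 30*t+41 :=
      step_prime (by norm_num) rfl hb6 (by norm_num) (by omega) h41
        (fun z h1 h2 => by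
          rcases (show z = 30*t+39 ∨ z = 30*t+40 by omega) with rfl|rfl
          exacts [comp39 t, comp40 t])
    have ha6 : Hseq (30*t+31) 6 = 30*t+42 :=
      step_comp (by norm_num) rfl ha5 (by norm_num) (by omega) (comp42 t)
        (fun z h1 h2 => by omega)
    by_cases h43 : Nat.Prime (30*t+43)
    · exact (mergeCase t h h43 hb7 ha6).elim
    · exact caseA t hb ha h p37 h41 h43 hb7 ha6
  · have ha5 : Hseq (30*t+31) 5 = 30*t+43 := by
      have n39 : Hseq (30*t+31) 5 ≠ 30*t+39 := fun he => comp39 t (he ▸ m5b)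
      have n40 : Hseq (30*t+31) 5 ≠ 30*t+40 := fun he => comp40 t (he ▸ m5b)
      have n41 : Hseq (30*t+31) 5 ≠ 30*t+41 := fun he => h41 (he ▸ m5b)
      have n42 : Hseq (30*t+31) 5 ≠ 30*t+42 := fun he => comp42 t (he ▸ m5b)
      omega
    have p43 : Nat.Prime (30*t+43) := ha5 ▸ m5b
    have hb7 : Hseq (30*t+29) 7 = 30*t+43 :=
      step_prime (by norm_num) rfl hb6 (by norm_num) (by omega) p43
        (fun z h1 h2 => by
          rcases (show z = 30*t+39 ∨ z = 30*t+40 ∨ z = 30*t+41 ∨ z = 30*t+42 by omega)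
            with rfl|rfl|rfl|rfl
          exacts [comp39 t, comp40 t, h41, comp42 t])
    have ha6 : Hseq (30*t+31) 6 = 30*t+44 :=
      step_comp (by norm_num) rfl ha5 (by norm_num) (by omega) (comp44 t)
        (fun z h1 h2 => by omega)
    have hb8 : Hseq (30*t+29) 8 = 30*t+44 :=
      step_comp (by norm_num) rfl hb7 (by norm_num) (by omega) (comp44 t)
        (fun z h1 h2 => by omega)
    have hb9 : Hseq (30*t+29) 9 = 30*t+45 :=
      step_comp (by norm_num) rfl hb8 (by norm_num) (by omega) (comp45 t)
        (fun z h1 h2 => by omega)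
    have hb10 : Hseq (30*t+29) 10 = 30*t+46 :=
      step_comp (by norm_num) rfl hb9 (by norm_num) (by omega) (comp46 t)
        (fun z h1 h2 => by omega)
    by_cases h47 : Nat.Prime (30*t+47)
    · exact caseB47 t hb ha h p37 h41 p43 h47 hb10 ha6
    · exact caseBn47 t hb ha h p37 h41 p43 h47 hb7 hb10 ha6
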